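/- Let A and A+E be symmetric n×n real matrices with eigenvalues λ₁(A) ≥ … ≥ λ_n(A) and λ₁(A+E) ≥ … ≥ λ_n(A+E). Then ∑_{i=1}^n (λ_i(A+E) - λ_i(A))² ≤ ‖E‖_F², where ‖·‖_F is the Frobenius norm. -/

import Mathlib

open Matrix Polynomial

section Aux

open Finset

variable {n : ℕ}

private lemma coe_ofFn_eq (f : Fin n → ℝ) :
    (List.ofFn f : Multiset ℝ) = Multiset.map f Finset.univ.val := by
  simp [List.ofFn_eq_map, Fin.univ_def]

private lemma monotone_eq_of_multiset_eq {f g : Fin n → ℝ} (hf : Monotone f) (hg : Monotone g)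
    (h : Multiset.map f Finset.univ.val = Multiset.map g Finset.univ.val) : f = g := by
  have hperm : List.Perm (List.ofFn f) (List.ofFn g) := by
    rw [← Multiset.coe_eq_coe, coe_ofFn_eq, coe_ofFn_eq, h]
  exact List.ofFn_injective (List.Perm.eq_of_sortedLE hf.sortedLE_ofFn hg.sortedLE_ofFn hperm)

private lemma map_comp_perm (f : Fin n → ℝ) (σ : Equiv.Perm (Fin n)) :
    Multiset.map (f ∘ σ) Finset.univ.val = Multiset.map f Finset.univ.val := by
  rw [← Multiset.map_map, Multiset.map_univ_val_equiv]

private lemma exists_comp_perm_eq {f g : Fin n → ℝ}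
    (h : Multiset.map f Finset.univ.val = Multiset.map g Finset.univ.val) :
    ∃ σ : Equiv.Perm (Fin n), f = g ∘ σ := by
  have h1 : f ∘ Tuple.sort f = g ∘ Tuple.sort g :=
    monotone_eq_of_multiset_eq (Tuple.monotone_sort f) (Tuple.monotone_sort g)
      (by rw [map_comp_perm, map_comp_perm, h])
  refine ⟨(Tuple.sort f).symm.trans (Tuple.sort g), ?_⟩
  funext i
  have := congrFun h1 ((Tuple.sort f).symm i)
  simpa using this

private lemma multiset_eq_of_prod_eq {f g : Fin n → ℝ}
    (h : ∏ i, (X - C (f i)) = ∏ i, (X - C (g i))) :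
    Multiset.map f Finset.univ.val = Multiset.map g Finset.univ.val := by
  have key : ∀ f : Fin n → ℝ,
      (∏ i, (X - C (f i))) = ((Multiset.map f Finset.univ.val).map fun a => X - C a).prod := by
    intro f
    rw [Multiset.map_map, Finset.prod_eq_multiset_prod]
    rfl
  calc Multiset.map f Finset.univ.val
      = ((Multiset.map f Finset.univ.val).map fun a => X - C a).prod.roots :=
        (Polynomial.roots_multiset_prod_X_sub_C _).symm
    _ = ((Multiset.map g Finset.univ.val).map fun a => X - C a).prod.roots := by
        rw [← key, ← key, h]
    _ = Multiset.map g Finset.univ.val := Polynomial.roots_multiset_prod_X_sub_C _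

private lemma charpoly_diag (d : Fin n → ℝ) :
    (Matrix.diagonal d).charpoly = ∏ i, (X - C (d i)) := by
  have hcm : charmatrix (Matrix.diagonal d) = Matrix.diagonal fun i => X - C (d i) := by
    ext i j
    by_cases hij : i = j
    · subst hij; simp
    · simp [charmatrix_apply_ne _ _ _ hij, Matrix.diagonal_apply_ne _ hij]
  rw [Matrix.charpoly, hcm, Matrix.det_diagonal]

private lemma charpoly_conj (P M Q : Matrix (Fin n) (Fin n) ℝ) (h1 : P * Q = 1) :
    (P * M * Q).charpoly = M.charpoly := by
  let F := (RingHom.mapMatrix (C : ℝ →+* ℝ[X]) :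
    Matrix (Fin n) (Fin n) ℝ →+* Matrix (Fin n) (Fin n) ℝ[X])
  have hFPQ : F P * F Q = 1 := by rw [← _root_.map_mul, h1, _root_.map_one]
  have key : charmatrix (P * M * Q) = F P * charmatrix M * F Q := by
    show Matrix.scalar (Fin n) (X : ℝ[X]) - F (P * M * Q)
        = F P * (Matrix.scalar (Fin n) (X : ℝ[X]) - F M) * F Q
    rw [mul_sub, sub_mul]
    congr 1
    · rw [← (Matrix.scalar_commute (X : ℝ[X]) (fun r => Commute.all _ _) (F P)).eq,
        mul_assoc, hFPQ, mul_one]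
    · rw [_root_.map_mul, _root_.map_mul]
  rw [Matrix.charpoly, key, Matrix.det_mul, Matrix.det_mul, Matrix.charpoly]
  have hdet : (F P).det * (F Q).det = 1 := by
    rw [← Matrix.det_mul, hFPQ, Matrix.det_one]
  calc (F P).det * (charmatrix M).det * (F Q).det
      = (charmatrix M).det * ((F P).det * (F Q).det) := by ring
    _ = (charmatrix M).det := by rw [hdet, mul_one]

private lemma ds_cross_le {S : Matrix (Fin n) (Fin n) ℝ} (hS : S ∈ doublyStochastic ℝ (Fin n))
    {μ ν : Fin n → ℝ} (hμ : Antitone μ) (hν : Antitone ν) :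
    ∑ i, ∑ j, S i j * (μ i * ν j) ≤ ∑ i, μ i * ν i := by
  have hlin : IsLinearMap ℝ
      fun M : Matrix (Fin n) (Fin n) ℝ => ∑ i, ∑ j, M i j * (μ i * ν j) := by
    constructor
    · intro M N
      simp [Matrix.add_apply, add_mul, Finset.sum_add_distrib]
    · intro c M
      simp [Matrix.smul_apply, smul_eq_mul, mul_assoc, Finset.mul_sum]
  have hconv : Convex ℝ
      {M : Matrix (Fin n) (Fin n) ℝ | ∑ i, ∑ j, M i j * (μ i * ν j) ≤ ∑ i, μ i * ν i} :=
    convex_halfSpace_le hlin _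
  have hsub : {M : Matrix (Fin n) (Fin n) ℝ | ∃ σ : Equiv.Perm (Fin n), σ.permMatrix ℝ = M} ⊆
      {M : Matrix (Fin n) (Fin n) ℝ | ∑ i, ∑ j, M i j * (μ i * ν j) ≤ ∑ i, μ i * ν i} := by
    rintro M ⟨σ, rfl⟩
    have hval : ∀ i, ∑ j, (σ.permMatrix ℝ) i j * (μ i * ν j) = μ i * ν (σ i) := by
      intro i
      rw [Finset.sum_eq_single (σ i)]
      · simp [Equiv.Perm.permMatrix, PEquiv.toMatrix_apply, Equiv.toPEquiv_apply]
      · intro j _ hj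
        simp [Equiv.Perm.permMatrix, PEquiv.toMatrix_apply, Equiv.toPEquiv_apply,
          Option.mem_def, hj.symm]
      · exact fun h => absurd (Finset.mem_univ _) h
    have hre := (hμ.monovary hν).sum_smul_comp_perm_le_sum_smul (σ := σ)
    simp only [smul_eq_mul] at hre
    show ∑ i, ∑ j, (σ.permMatrix ℝ) i j * (μ i * ν j) ≤ ∑ i, μ i * ν i
    calc ∑ i, ∑ j, (σ.permMatrix ℝ) i j * (μ i * ν j)
        = ∑ i, μ i * ν (σ i) := Finset.sum_congr rfl fun i _ => hval i
      _ ≤ ∑ i, μ i * ν i := hre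
  have hS' : S ∈ (doublyStochastic ℝ (Fin n) : Set (Matrix (Fin n) (Fin n) ℝ)) := hS
  rw [doublyStochastic_eq_convexHull_permMatrix] at hS'
  exact convexHull_min hsub hconv hS'

end Aux

/-- Wielandt–Hoffman inequality: if `μ` and `ν` are the nonincreasing enumerations
(with multiplicity) of the eigenvalues of the symmetric matrices `A` and `A + E`,
then `∑ (ν i - μ i)² ≤ ‖E‖_F²`. -/
theorem wielandt_hoffman {n : ℕ} (A E : Matrix (Fin n) (Fin n) ℝ)
    (hA : A.IsSymm) (hAE : (A + E).IsSymm)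
    (μ ν : Fin n → ℝ) (hμ : Antitone μ) (hν : Antitone ν)
    (hμeig : A.charpoly = ∏ i, (X - C (μ i)))
    (hνeig : (A + E).charpoly = ∏ i, (X - C (ν i))) :
    ∑ i, (ν i - μ i) ^ 2 ≤ ∑ i, ∑ j, (E i j) ^ 2 := by
  classical
  set B := A + E with hB
  have hAh : A.IsHermitian := by
    show Aᴴ = A
    rw [Matrix.conjTranspose_eq_transpose_of_trivial]
    exact hA.eq
  have hBh : B.IsHermitian := by
    show Bᴴ = B
    rw [Matrix.conjTranspose_eq_transpose_of_trivial]
    exact hAE.eq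
  have hEBA : E = B - A := by rw [hB, add_sub_cancel_left]
  have hE : E.IsSymm := by
    rw [hEBA, sub_eq_add_neg]
    exact hAE.add hA.neg
  set e : Fin n → ℝ := hAh.eigenvalues with he
  set e' : Fin n → ℝ := hBh.eigenvalues with he'
  set U : Matrix (Fin n) (Fin n) ℝ := (hAh.eigenvectorUnitary : Matrix (Fin n) (Fin n) ℝ) with hU
  set V : Matrix (Fin n) (Fin n) ℝ := (hBh.eigenvectorUnitary : Matrix (Fin n) (Fin n) ℝ) with hV
  have hU1 : U * star U = 1 := Matrix.mem_unitaryGroup_iff.mp hAh.eigenvectorUnitary.2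
  have hU2 : star U * U = 1 := Matrix.mem_unitaryGroup_iff'.mp hAh.eigenvectorUnitary.2
  have hV1 : V * star V = 1 := Matrix.mem_unitaryGroup_iff.mp hBh.eigenvectorUnitary.2
  have hV2 : star V * V = 1 := Matrix.mem_unitaryGroup_iff'.mp hBh.eigenvectorUnitary.2
  have hofReal : ∀ f : Fin n → ℝ, (RCLike.ofReal ∘ f) = f := by
    intro f; rw [RCLike.ofReal_real_eq_id, Function.id_comp]
  have hspecA : A = U * Matrix.diagonal e * star U := by
    have h := hAh.spectral_theorem
    rwa [hofReal] at h
  have hspecB : B = V * Matrix.diagonal e' * star V := by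
    have h := hBh.spectral_theorem
    rwa [hofReal] at h
  -- characteristic polynomials
  have hcA : A.charpoly = ∏ i, (X - C (e i)) := by
    rw [hspecA, charpoly_conj _ _ _ hU1, charpoly_diag]
  have hcB : B.charpoly = ∏ i, (X - C (e' i)) := by
    rw [hspecB, charpoly_conj _ _ _ hV1, charpoly_diag]
  obtain ⟨π, hπ⟩ : ∃ σ : Equiv.Perm (Fin n), μ = e ∘ σ :=
    exists_comp_perm_eq (multiset_eq_of_prod_eq (by rw [← hμeig, hcA]))
  obtain ⟨ρ, hρ⟩ : ∃ σ : Equiv.Perm (Fin n), ν = e' ∘ σ :=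
    exists_comp_perm_eq (multiset_eq_of_prod_eq (by rw [← hνeig, hcB]))
  -- the orthogonal matrix W and doubly stochastic S
  set W : Matrix (Fin n) (Fin n) ℝ := star U * V with hWdef
  have hsW : star W = star V * U := by rw [hWdef, StarMul.star_mul, star_star]
  have hW1 : W * star W = 1 := by
    rw [hWdef, StarMul.star_mul, star_star, mul_assoc, ← mul_assoc V, hV1, one_mul, hU2]
  have hW2 : star W * W = 1 := by
    rw [hsW, hWdef, mul_assoc, ← mul_assoc U, hU1, one_mul, hV2]
  set S : Matrix (Fin n) (Fin n) ℝ := Matrix.of fun i j => (W (π i) (ρ j)) ^ 2 with hSdef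
  have hSmem : S ∈ doublyStochastic ℝ (Fin n) := by
    rw [mem_doublyStochastic_iff_sum]
    refine ⟨fun i j => sq_nonneg _, fun i => ?_, fun j => ?_⟩
    · show ∑ j, (W (π i) (ρ j)) ^ 2 = 1
      rw [Equiv.sum_comp ρ fun j => (W (π i) j) ^ 2]
      have h := congrFun (congrFun hW1 (π i)) (π i)
      simpa [Matrix.mul_apply, Matrix.star_apply, sq] using h
    · show ∑ i, (W (π i) (ρ j)) ^ 2 = 1
      rw [Equiv.sum_comp π fun i => (W i (ρ j)) ^ 2]
      have h := congrFun (congrFun hW2 (ρ j)) (ρ j)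
      simpa [Matrix.mul_apply, Matrix.star_apply, sq] using h
  have collapseU : ∀ M : Matrix (Fin n) (Fin n) ℝ, star U * (U * M) = M := by
    intro M; rw [← mul_assoc, hU2, one_mul]
  -- trace computations
  have htrA : Matrix.trace (A * A) = ∑ i, e i ^ 2 := by
    calc Matrix.trace (A * A)
        = Matrix.trace (U * (Matrix.diagonal e * (star U * (U * (Matrix.diagonal e * star U))))) := by
          rw [hspecA]; simp only [Matrix.mul_assoc]
      _ = Matrix.trace (U * (Matrix.diagonal e * (Matrix.diagonal e * star U))) := by
          rw [collapseU]
      _ = Matrix.trace (Matrix.diagonal e * (Matrix.diagonal e * star U) * U) :=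
          Matrix.trace_mul_comm _ _
      _ = Matrix.trace (Matrix.diagonal e * Matrix.diagonal e) := by
          simp only [Matrix.mul_assoc]; rw [hU2, Matrix.mul_one]
      _ = ∑ i, e i ^ 2 := by
          rw [Matrix.diagonal_mul_diagonal, Matrix.trace_diagonal]
          exact Finset.sum_congr rfl fun i _ => (pow_two (e i)).symm
  have htrB : Matrix.trace (B * B) = ∑ i, e' i ^ 2 := by
    have collapseV : ∀ M : Matrix (Fin n) (Fin n) ℝ, star V * (V * M) = M := by
      intro M; rw [← mul_assoc, hV2, one_mul]
    calc Matrix.trace (B * B)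
        = Matrix.trace (V * (Matrix.diagonal e' * (star V * (V * (Matrix.diagonal e' * star V))))) := by
          rw [hspecB]; simp only [Matrix.mul_assoc]
      _ = Matrix.trace (V * (Matrix.diagonal e' * (Matrix.diagonal e' * star V))) := by
          rw [collapseV]
      _ = Matrix.trace (Matrix.diagonal e' * (Matrix.diagonal e' * star V) * V) :=
          Matrix.trace_mul_comm _ _
      _ = Matrix.trace (Matrix.diagonal e' * Matrix.diagonal e') := by
          simp only [Matrix.mul_assoc]; rw [hV2, Matrix.mul_one]
      _ = ∑ i, e' i ^ 2 := by
          rw [Matrix.diagonal_mul_diagonal, Matrix.trace_diagonal]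
          exact Finset.sum_congr rfl fun i _ => (pow_two (e' i)).symm
  have htrAB : Matrix.trace (A * B) = ∑ i, ∑ j, S i j * (μ i * ν j) := by
    have htr2 : Matrix.trace (A * B)
        = Matrix.trace (Matrix.diagonal e * (W * (Matrix.diagonal e' * star W))) := by
      calc Matrix.trace (A * B)
          = Matrix.trace (U * (Matrix.diagonal e * (star U * (V * (Matrix.diagonal e' * star V))))) := by
            rw [hspecA, hspecB]; simp only [Matrix.mul_assoc]
        _ = Matrix.trace (Matrix.diagonal e * (star U * (V * (Matrix.diagonal e' * star V))) * U) :=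
            Matrix.trace_mul_comm _ _
        _ = Matrix.trace (Matrix.diagonal e * (W * (Matrix.diagonal e' * star W))) := by
            rw [hsW, hWdef]; simp only [Matrix.mul_assoc]
    have hentry : Matrix.trace (Matrix.diagonal e * (W * (Matrix.diagonal e' * star W)))
        = ∑ k, ∑ l, (W k l) ^ 2 * (e k * e' l) := by
      rw [Matrix.trace]
      refine Finset.sum_congr rfl fun k _ => ?_
      rw [Matrix.diag_apply, Matrix.diagonal_mul, Matrix.mul_apply, Finset.mul_sum]
      refine Finset.sum_congr rfl fun l _ => ?_
      rw [Matrix.diagonal_mul, Matrix.star_apply, star_trivial]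
      ring
    rw [htr2, hentry]
    calc ∑ k, ∑ l, (W k l) ^ 2 * (e k * e' l)
        = ∑ k, ∑ j, (W k (ρ j)) ^ 2 * (e k * e' (ρ j)) :=
          Finset.sum_congr rfl fun k _ =>
            (Equiv.sum_comp ρ fun l => (W k l) ^ 2 * (e k * e' l)).symm
      _ = ∑ i, ∑ j, (W (π i) (ρ j)) ^ 2 * (e (π i) * e' (ρ j)) :=
          (Equiv.sum_comp π fun k => ∑ j, (W k (ρ j)) ^ 2 * (e k * e' (ρ j))).symm
      _ = ∑ i, ∑ j, S i j * (μ i * ν j) := by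
          refine Finset.sum_congr rfl fun i _ => Finset.sum_congr rfl fun j _ => ?_
          rw [hπ, hρ]
          rfl
  have htrE : ∑ i, ∑ j, E i j ^ 2 = Matrix.trace (E * E) := by
    rw [Matrix.trace]
    refine Finset.sum_congr rfl fun i _ => ?_
    rw [Matrix.diag_apply, Matrix.mul_apply]
    refine Finset.sum_congr rfl fun j _ => ?_
    rw [pow_two, hE.apply j i]
  have htrEE : Matrix.trace (E * E)
      = Matrix.trace (B * B) + Matrix.trace (A * A) - 2 * Matrix.trace (A * B) := by
    rw [hEBA]
    have hexp : (B - A) * (B - A) = B * B - B * A - A * B + A * A := by noncomm_ring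
    rw [hexp, Matrix.trace_add, Matrix.trace_sub, Matrix.trace_sub,
      Matrix.trace_mul_comm B A]
    ring
  have hsumμ : ∑ i, μ i ^ 2 = ∑ i, e i ^ 2 := by
    rw [hπ]; exact Equiv.sum_comp π fun k => e k ^ 2
  have hsumν : ∑ i, ν i ^ 2 = ∑ i, e' i ^ 2 := by
    rw [hρ]; exact Equiv.sum_comp ρ fun k => e' k ^ 2
  have hexpand : ∑ i, (ν i - μ i) ^ 2
      = ∑ i, ν i ^ 2 + ∑ i, μ i ^ 2 - 2 * ∑ i, μ i * ν i := by
    have h1 : ∀ i, (ν i - μ i) ^ 2 = ν i ^ 2 + μ i ^ 2 - 2 * (μ i * ν i) := fun i => by ring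
    simp_rw [h1]
    rw [Finset.sum_sub_distrib, Finset.sum_add_distrib, ← Finset.mul_sum]
  have hcross : ∑ i, ∑ j, S i j * (μ i * ν j) ≤ ∑ i, μ i * ν i :=
    ds_cross_le hSmem hμ hν
  have hRHS : ∑ i, ∑ j, E i j ^ 2
      = ∑ i, e' i ^ 2 + ∑ i, e i ^ 2 - 2 * ∑ i, ∑ j, S i j * (μ i * ν j) := by
    rw [htrE, htrEE, htrA, htrB, htrAB]
  rw [hexpand, hRHS, hsumμ, hsumν]
  linarith
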